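/- Let k ≥ 2 and k+2 ≤ j ≤ 2k. Then every bipartite graph on 2j−1−k vertices contains a k-sparse set of size j, and the complete bipartite graph K_{j−k−1,j−1} (on 2j−2−k vertices) contains no k-sparse j-set. Consequently, for i ≥ 2k+3, R_k^BIP(i,j) = 2j−1−k. -/

import Mathlib

open SimpleGraph

/-- A set `S` of vertices is `k`-sparse in `G` if every vertex of `S` has at most `k`
neighbors inside `S`. -/
def KSparse {V : Type*} (G : SimpleGraph V) (k : ℕ) (S : Set V) : Prop :=
  ∀ v ∈ S, ({u ∈ S | G.Adj v u}).ncard ≤ k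

/-- A set is `k`-dense in `G` if it is `k`-sparse in the complement of `G`. -/
def KDense {V : Type*} (G : SimpleGraph V) (k : ℕ) (S : Set V) : Prop :=
  KSparse Gᶜ k S

/-- `G` has a `k`-dense set of size `i`. -/
def HasKDense {V : Type*} (G : SimpleGraph V) (k i : ℕ) : Prop :=
  ∃ D : Set V, D.ncard = i ∧ KDense G k D

/-- `G` has a `k`-sparse set of size `j`. -/
def HasKSparse {V : Type*} (G : SimpleGraph V) (k j : ℕ) : Prop :=
  ∃ S : Set V, S.ncard = j ∧ KSparse G k S

/-- A cactus: every edge lies on at most one cycle, i.e. any two cycles sharing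
an edge have the same edge set. -/
def IsCactus {V : Type*} (G : SimpleGraph V) : Prop :=
  ∀ (u v : V) (c₁ : G.Walk u u) (c₂ : G.Walk v v), c₁.IsCycle → c₂.IsCycle →
    (∃ e, e ∈ c₁.edges ∧ e ∈ c₂.edges) → (∀ e, e ∈ c₁.edges ↔ e ∈ c₂.edges)

/-- A split graph: the vertices partition into a clique and an independent set. -/
def IsSplit {V : Type*} (G : SimpleGraph V) : Prop :=
  ∃ K : Set V, G.IsClique K ∧ Gᶜ.IsClique Kᶜ

/-- A cograph: no induced path on four vertices. -/
def IsCograph {V : Type*} (G : SimpleGraph V) : Prop :=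
  ¬ ∃ f : Fin 4 ↪ V, ∀ a b : Fin 4, G.Adj (f a) (f b) ↔ (SimpleGraph.pathGraph 4).Adj a b

lemma sparse_parts {V : Type*} [Finite V] (G : SimpleGraph V) (k a b : ℕ) (A : Set V)
    (h1 : ∀ v u, v ∈ A → u ∈ A → ¬ G.Adj v u)
    (h2 : ∀ v u, v ∉ A → u ∉ A → ¬ G.Adj v u)
    (ha : a ≤ A.ncard) (hb : b ≤ Aᶜ.ncard)
    (hak : 1 ≤ a → b ≤ k) (hbk : 1 ≤ b → a ≤ k) :
    HasKSparse G k (a + b) := by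
  obtain ⟨SA, hSAsub, hSAcard⟩ := Set.exists_subset_card_eq ha
  obtain ⟨SB, hSBsub, hSBcard⟩ := Set.exists_subset_card_eq hb
  have hdisj : Disjoint SA SB :=
    Set.disjoint_of_subset hSAsub hSBsub disjoint_compl_right
  refine ⟨SA ∪ SB, ?_, ?_⟩
  · rw [Set.ncard_union_eq hdisj (Set.toFinite _) (Set.toFinite _), hSAcard, hSBcard]
  · intro v hv
    rcases hv with hv | hv
    · have hsub : {u ∈ SA ∪ SB | G.Adj v u} ⊆ SB := by
        rintro u ⟨hu, hadj⟩
        rcases hu with hu | hu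
        · exact absurd hadj (h1 v u (hSAsub hv) (hSAsub hu))
        · exact hu
      have h1a : 1 ≤ a := by
        rw [← hSAcard]; exact (Set.ncard_pos (Set.toFinite _)).mpr ⟨v, hv⟩
      calc ({u ∈ SA ∪ SB | G.Adj v u}).ncard ≤ SB.ncard :=
            Set.ncard_le_ncard hsub (Set.toFinite _)
        _ = b := hSBcard
        _ ≤ k := hak h1a
    · have hsub : {u ∈ SA ∪ SB | G.Adj v u} ⊆ SA := by
        rintro u ⟨hu, hadj⟩
        rcases hu with hu | hu
        · exact hu
        · exact absurd hadj (h2 v u (hSBsub hv) (hSBsub hu))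
      have h1b : 1 ≤ b := by
        rw [← hSBcard]; exact (Set.ncard_pos (Set.toFinite _)).mpr ⟨v, hv⟩
      calc ({u ∈ SA ∪ SB | G.Adj v u}).ncard ≤ SA.ncard :=
            Set.ncard_le_ncard hsub (Set.toFinite _)
        _ = a := hSAcard
        _ ≤ k := hbk h1b

lemma no_sparse_cbip {V : Type*} [Finite V] (G : SimpleGraph V) (k j : ℕ) (A : Set V)
    (hadj : ∀ v u, G.Adj v u ↔ ((v ∈ A ∧ u ∉ A) ∨ (v ∉ A ∧ u ∈ A)))
    (hA : A.ncard + k + 1 ≤ j) (hB : Aᶜ.ncard + 1 ≤ j) : ¬ HasKSparse G k j := by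
  rintro ⟨S, hScard, hSsp⟩
  have hsplit : (S ∩ A) ∪ (S ∩ Aᶜ) = S := Set.inter_union_compl S A
  have hdisj : Disjoint (S ∩ A) (S ∩ Aᶜ) :=
    Set.disjoint_of_subset Set.inter_subset_right Set.inter_subset_right
      disjoint_compl_right
  have hsum : (S ∩ A).ncard + (S ∩ Aᶜ).ncard = j := by
    rw [← Set.ncard_union_eq hdisj (Set.toFinite _) (Set.toFinite _), hsplit, hScard]
  have hSA : (S ∩ A).ncard ≤ A.ncard :=
    Set.ncard_le_ncard Set.inter_subset_right (Set.toFinite _)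
  have hSB : (S ∩ Aᶜ).ncard ≤ Aᶜ.ncard :=
    Set.ncard_le_ncard Set.inter_subset_right (Set.toFinite _)
  have hne : (S ∩ A).Nonempty := by
    apply Set.nonempty_of_ncard_ne_zero; omega
  obtain ⟨v, hvS, hvA⟩ := hne
  have hkey : {u ∈ S | G.Adj v u} = S ∩ Aᶜ := by
    ext u
    simp only [Set.mem_setOf_eq, Set.mem_inter_iff, Set.mem_compl_iff, hadj]
    tauto
  have := hSsp v hvS
  rw [hkey] at this
  omega

lemma no_dense {V : Type*} [Finite V] (G : SimpleGraph V) (k i : ℕ)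
    (hG : G.Colorable 2) (hi : 2 * k + 3 ≤ i) : ¬ HasKDense G k i := by
  rintro ⟨D, hDcard, hdense⟩
  obtain ⟨C⟩ := hG
  have key : ∀ v ∈ D, i ≤ ({u ∈ D | G.Adj v u}).ncard + k + 1 := by
    intro v hv
    have hPQ : {u ∈ D | Gᶜ.Adj v u} ∪ {u ∈ D | ¬ Gᶜ.Adj v u} = D := by
      ext u; simp only [Set.mem_union, Set.mem_setOf_eq]; tauto
    have hdj : Disjoint {u ∈ D | Gᶜ.Adj v u} {u ∈ D | ¬ Gᶜ.Adj v u} := by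
      rw [Set.disjoint_left]; rintro u ⟨_, h⟩ ⟨_, h'⟩; exact h' h
    have hsum : ({u ∈ D | Gᶜ.Adj v u}).ncard + ({u ∈ D | ¬ Gᶜ.Adj v u}).ncard = i := by
      rw [← Set.ncard_union_eq hdj (Set.toFinite _) (Set.toFinite _), hPQ, hDcard]
    have hP : ({u ∈ D | Gᶜ.Adj v u}).ncard ≤ k := hdense v hv
    have hQ : {u ∈ D | ¬ Gᶜ.Adj v u} ⊆ insert v {u ∈ D | G.Adj v u} := by
      rintro u ⟨hu, h⟩
      rw [SimpleGraph.compl_adj] at h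
      push_neg at h
      by_cases hvu : v = u
      · exact Or.inl hvu.symm
      · exact Or.inr ⟨hu, h hvu⟩
    have := Set.ncard_le_ncard hQ (Set.toFinite _)
    have := Set.ncard_insert_le v {u ∈ D | G.Adj v u}
    omega
  have hDne : D.Nonempty := by
    apply Set.nonempty_of_ncard_ne_zero; omega
  obtain ⟨v, hv⟩ := hDne
  have hNv := key v hv
  have hNvne : ({u ∈ D | G.Adj v u}).Nonempty := by
    apply Set.nonempty_of_ncard_ne_zero; omega
  obtain ⟨u, huD, hadj⟩ := hNvne
  have hNu := key u huD
  have hdj : Disjoint {w ∈ D | G.Adj v w} {w ∈ D | G.Adj u w} := by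
    rw [Set.disjoint_left]
    rintro w ⟨_, h1⟩ ⟨_, h2⟩
    have c1 := C.valid h1
    have c2 := C.valid h2
    have c3 := C.valid hadj
    have : ∀ x y z : Fin 2, x ≠ z → y ≠ z → x ≠ y → False := by decide
    exact this (C v) (C u) (C w) c1 c2 c3
  have hsub : {w ∈ D | G.Adj v w} ∪ {w ∈ D | G.Adj u w} ⊆ D := by
    rintro w (⟨h, _⟩ | ⟨h, _⟩) <;> exact h
  have := Set.ncard_le_ncard hsub (Set.toFinite _)
  rw [Set.ncard_union_eq hdj (Set.toFinite _) (Set.toFinite _)] at this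
  omega

theorem stmt16 (k j : ℕ) (hk : 2 ≤ k) (hj1 : k + 2 ≤ j) (hj2 : j ≤ 2 * k) :
    (∀ G : SimpleGraph (Fin (2 * j - 1 - k)), G.Colorable 2 →
        HasKSparse G k j) ∧
    ¬ HasKSparse (completeBipartiteGraph (Fin (j - k - 1)) (Fin (j - 1))) k j ∧
    (∀ i, 2 * k + 3 ≤ i →
      (∀ G : SimpleGraph (Fin (2 * j - 1 - k)), G.Colorable 2 →
          HasKDense G k i ∨ HasKSparse G k j) ∧
      (∃ G : SimpleGraph (Fin (2 * j - 2 - k)),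
          G.Colorable 2 ∧ ¬ HasKDense G k i ∧ ¬ HasKSparse G k j)) := by
  have fin2 : ∀ x y : Fin 2, x ≠ 0 → y ≠ 0 → x = y := by decide
  -- Part 1
  have part1 : ∀ G : SimpleGraph (Fin (2 * j - 1 - k)), G.Colorable 2 → HasKSparse G k j := by
    intro G hG
    obtain ⟨C⟩ := hG
    set A : Set (Fin (2 * j - 1 - k)) := {v | C v = 0} with hAdef
    have h1 : ∀ v u, v ∈ A → u ∈ A → ¬ G.Adj v u := by
      intro v u hv hu hadj
      exact C.valid hadj (hv.trans hu.symm)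
    have h2 : ∀ v u, v ∉ A → u ∉ A → ¬ G.Adj v u := by
      intro v u hv hu hadj
      exact C.valid hadj (fin2 _ _ hv hu)
    have hcard : A.ncard + Aᶜ.ncard = 2 * j - 1 - k := by
      have := Set.ncard_add_ncard_compl A
      simpa [Nat.card_eq_fintype_card] using this
    by_cases hA : j ≤ A.ncard
    · have h := sparse_parts G k j 0 A h1 h2 hA (Nat.zero_le _)
        (fun _ => Nat.zero_le k) (fun h => by omega)
      simpa using h
    · by_cases hB : j ≤ Aᶜ.ncard
      · have h := sparse_parts G k 0 j A h1 h2 (Nat.zero_le _) hB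
          (fun h => by omega) (fun _ => Nat.zero_le k)
        simpa using h
      · have h := sparse_parts G k (min A.ncard k) (j - min A.ncard k) A h1 h2
          (min_le_left _ _) (by omega) (fun _ => by omega) (fun _ => min_le_right _ _)
        rwa [show min A.ncard k + (j - min A.ncard k) = j by omega] at h
  -- Part 2
  have part2 : ¬ HasKSparse (completeBipartiteGraph (Fin (j - k - 1)) (Fin (j - 1))) k j := by
    have hrA : (Set.range (Sum.inl : Fin (j - k - 1) → Fin (j - k - 1) ⊕ Fin (j - 1))).ncard
        = j - k - 1 := by
      rw [← Nat.card_coe_set_eq, Nat.card_range_of_injective Sum.inl_injective,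
        Nat.card_eq_fintype_card, Fintype.card_fin]
    have hrB : (Set.range (Sum.inl : Fin (j - k - 1) → Fin (j - k - 1) ⊕ Fin (j - 1)))ᶜ.ncard
        = j - 1 := by
      rw [Set.compl_range_inl, ← Nat.card_coe_set_eq,
        Nat.card_range_of_injective Sum.inr_injective,
        Nat.card_eq_fintype_card, Fintype.card_fin]
    refine no_sparse_cbip _ k j (Set.range Sum.inl) ?_ (by omega) (by omega)
    rintro (v | v) (u | u) <;> simp [completeBipartiteGraph]
  refine ⟨part1, part2, fun i hi => ⟨fun G hG => Or.inr (part1 G hG), ?_⟩⟩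
  -- Part 3 example
  set t := j - k - 1 with htdef
  refine ⟨⟨fun v u => ((v : ℕ) < t ∧ ¬ (u : ℕ) < t) ∨ (¬ (v : ℕ) < t ∧ (u : ℕ) < t),
    ⟨fun v u h => by tauto⟩, ⟨fun v h => by tauto⟩⟩, ?_, ?_, ?_⟩
  case refine_1 =>
    exact ⟨SimpleGraph.Coloring.mk (fun v => if (v : ℕ) < t then 0 else 1)
      (by intro v u hadj; rcases hadj with ⟨h1, h2⟩ | ⟨h1, h2⟩ <;> simp [h1, h2])⟩
  case refine_2 =>
    apply no_dense _ k i ?_ hi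
    exact ⟨SimpleGraph.Coloring.mk (fun v => if (v : ℕ) < t then 0 else 1)
      (by intro v u hadj; rcases hadj with ⟨h1, h2⟩ | ⟨h1, h2⟩ <;> simp [h1, h2])⟩
  case refine_3 =>
    have ht : t ≤ 2 * j - 2 - k := by omega
    have hrA : ({v : Fin (2 * j - 2 - k) | (v : ℕ) < t}).ncard = t := by
      rw [← Fin.range_castLE ht, ← Nat.card_coe_set_eq,
        Nat.card_range_of_injective (Fin.castLE_injective ht),
        Nat.card_eq_fintype_card, Fintype.card_fin]
    have hrB : ({v : Fin (2 * j - 2 - k) | (v : ℕ) < t})ᶜ.ncard = j - 1 := by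
      have := Set.ncard_add_ncard_compl ({v : Fin (2 * j - 2 - k) | (v : ℕ) < t})
      simp [Nat.card_eq_fintype_card] at this
      omega
    refine no_sparse_cbip _ k j ({v : Fin (2 * j - 2 - k) | (v : ℕ) < t}) ?_ (by omega) (by omega)
    intro v u
    rfl
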